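/- Let d = 2ℓ ≥ 2 be even and k ≥ 2, and let v : ℝ^d → ℝ^d be v(x_1,y_1,…,x_ℓ,y_ℓ) = (−y_1,x_1,…,−y_ℓ,x_ℓ). Let 𝒞 ⊆ F(ℝ^d,k) × F(ℝ^d,k) be the set of pairs (C,C′) of colinear configurations with L_C = L_{C′}. For C = (x_1,…,x_k), C′ = (x′_1,…,x′_k) with (C,C′) ∈ 𝒞, define Γ̄^{C,C′}(t) = (Γ̄^{C,C′}_1(t),…,Γ̄^{C,C′}_k(t)) by Γ̄^{C,C′}_i(t) = x_i + 3·t·i·v(e_C) for 0 ≤ t ≤ 1/3, Γ̄^{C,C′}_i(t) = x_i + i·v(e_C) + (3t−1)(x′_i − x_i) for 1/3 ≤ t ≤ 2/3, and Γ̄^{C,C′}_i(t) = x′_i + i(3−3t)·v(e_C) for 2/3 ≤ t ≤ 1. Then Γ̄^{C,C′}(t) ∈ F(ℝ^d,k) for all t ∈ [0,1], Γ̄^{C,C′}(0) = C, Γ̄^{C,C′}(1) = C′, and the resulting map Γ̄ : 𝒞 → P(F(ℝ^d,k)) is a continuous section of e_2 over 𝒞. -/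

import Mathlib

open unitInterval

noncomputable section

/-- Euclidean space ℝ^d. -/
abbrev E (d : ℕ) : Type := EuclideanSpace ℝ (Fin d)

/-- The ordered configuration space F(ℝ^d, k) of k distinct points in ℝ^d,
viewed as the subspace of (ℝ^d)^k of injective tuples. -/
def Conf (d k : ℕ) : Set (Fin k → E d) := {x | Function.Injective x}

/-- The time i/(n-1) ∈ [0,1] at which the i-th configuration is visited. -/
def eTime (n : ℕ) (i : Fin n) : unitInterval :=
  Set.projIcc 0 1 zero_le_one ((i : ℝ) / ((n : ℝ) - 1))

/-- The evaluation map e_n : P(X) → X^n,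
e_n(γ) = (γ(0), γ(1/(n-1)), …, γ((n-2)/(n-1)), γ(1)). -/
def evalMap {X : Type*} [TopologicalSpace X] (n : ℕ) (γ : C(unitInterval, X)) : Fin n → X :=
  fun i => γ (eTime n i)

/-- `A ⊆ X^n` admits a continuous section of the evaluation map e_n. -/
def HasSec {X : Type*} [TopologicalSpace X] (n : ℕ) (A : Set (Fin n → X)) : Prop :=
  ∃ s : A → C(unitInterval, X), Continuous s ∧ ∀ a : A, evalMap n (s a) = (a : Fin n → X)

/-- The orienting unit vector e_C = (x_2 - x_1)/|x_2 - x_1| of the line L_C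
through x_1 and x_2. -/
def eV {d k : ℕ} (hk : 2 ≤ k) (C : Fin k → E d) : E d :=
  ‖C ⟨1, by omega⟩ - C ⟨0, by omega⟩‖⁻¹ • (C ⟨1, by omega⟩ - C ⟨0, by omega⟩)

/-- The orthogonal projection p_C : ℝ^d → L_C onto the affine line L_C
through x_1 and x_2. -/
def pC {d k : ℕ} (hk : 2 ≤ k) (C : Fin k → E d) (x : E d) : E d :=
  C ⟨0, by omega⟩ + (inner ℝ (x - C ⟨0, by omega⟩) (eV hk C) : ℝ) • eV hk C

/-- c̄p(C) = cardinality of {p_C(x_1),…,p_C(x_k)}. -/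
def cpBar {d k : ℕ} (hk : 2 ≤ k) (C : Fin k → E d) : ℕ :=
  (Set.range fun i => pC hk C (C i)).ncard

/-- The affine line L_C through x_1 and x_2. -/
def lineC {d k : ℕ} (hk : 2 ≤ k) (C : Fin k → E d) : Set (E d) :=
  {y | ∃ r : ℝ, y = C ⟨0, by omega⟩ + r • eV hk C}

/-- C is colinear: all its points lie on L_C. -/
def Colin {d k : ℕ} (hk : 2 ≤ k) (C : Fin k → E d) : Prop :=
  ∀ i : Fin k, C i ∈ lineC hk C

/-- The unit tangent vector field v on S^{d-1} for even d = 2ℓ: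
v(x_1,y_1,…,x_ℓ,y_ℓ) = (-y_1,x_1,…,-y_ℓ,x_ℓ). -/
def vf {d : ℕ} (hd : Even d) (x : E d) : E d :=
  (WithLp.equiv 2 (Fin d → ℝ)).symm fun j =>
    if h : (j : ℕ) % 2 = 0 then -(x ⟨(j : ℕ) + 1, by obtain ⟨r, hr⟩ := hd; omega⟩)
    else x ⟨(j : ℕ) - 1, by omega⟩

/-- The i-th component of the path Γ̄^{C,C'} (the paper index i ∈ {1,…,k}
corresponds to (i:ℕ)+1 for i : Fin k): x_i + 3ti·v(e_C) on [0,1/3];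
x_i + i·v(e_C) + (3t-1)(x'_i - x_i) on [1/3,2/3]; x'_i + i(3-3t)·v(e_C)
on [2/3,1]. -/
def gammaBar {d k : ℕ} (hd : Even d) (hk : 2 ≤ k) (C C' : Fin k → E d)
    (i : Fin k) (t : ℝ) : E d :=
  if t ≤ 1 / 3 then C i + (3 * t * ((i : ℝ) + 1)) • vf hd (eV hk C)
  else if t ≤ 2 / 3 then C i + ((i : ℝ) + 1) • vf hd (eV hk C) + (3 * t - 1) • (C' i - C i)
  else C' i + (((i : ℝ) + 1) * (3 - 3 * t)) • vf hd (eV hk C)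

/-- The set 𝒞 of pairs (C,C') of colinear configurations with L_C = L_{C'}. -/
def Cpairs (d k : ℕ) (hk : 2 ≤ k) : Set ((Fin k → E d) × (Fin k → E d)) :=
  {p | p.1 ∈ Conf d k ∧ p.2 ∈ Conf d k ∧ Colin hk p.1 ∧ Colin hk p.2 ∧
    lineC hk p.1 = lineC hk p.2}


/-! ### Auxiliary lemmas -/

lemma vf_apply {d : ℕ} (hd : Even d) (x : E d) (j : Fin d) :
    vf hd x j = if _ : (j : ℕ) % 2 = 0 then
      -(x ⟨(j : ℕ) + 1, by obtain ⟨r, hr⟩ := hd; omega⟩)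
    else x ⟨(j : ℕ) - 1, by omega⟩ := rfl

lemma vf_apply_even {d : ℕ} (hd : Even d) (x : E d) (m : ℕ) (hm : m % 2 = 0) (h1 : m < d) :
    vf hd x ⟨m, h1⟩ = -(x ⟨m + 1, by obtain ⟨r, hr⟩ := hd; omega⟩) := by
  rw [vf_apply, dif_pos (by simpa using hm)]

lemma vf_apply_odd {d : ℕ} (hd : Even d) (x : E d) (m : ℕ) (hm : m % 2 = 1) (h1 : m < d) :
    vf hd x ⟨m, h1⟩ = x ⟨m - 1, by omega⟩ := by
  rw [vf_apply, dif_neg (by simp [hm])]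

lemma sum_pair_zero {d : ℕ} (hd : Even d) (f : Fin d → ℝ)
    (hf : ∀ (m : ℕ) (h0 : m % 2 = 0) (h1 : m + 1 < d),
      f ⟨m, by omega⟩ + f ⟨m + 1, h1⟩ = 0) :
    ∑ j, f j = 0 := by
  obtain ⟨l, hl⟩ := id hd
  refine Finset.sum_ninvolution
    (fun j => ⟨if (j : ℕ) % 2 = 0 then (j : ℕ) + 1 else (j : ℕ) - 1,
      by have := j.isLt; split_ifs with h <;> omega⟩) ?_ ?_ (fun j => Finset.mem_univ _) ?_
  · intro j
    beta_reduce
    rcases Nat.even_or_odd (j : ℕ) with h | h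
    · have hm : (j : ℕ) % 2 = 0 := Nat.even_iff.mp h
      have h1 : (j : ℕ) + 1 < d := by have := j.isLt; omega
      have hgj : (⟨if (j : ℕ) % 2 = 0 then (j : ℕ) + 1 else (j : ℕ) - 1, by
          have := j.isLt; split_ifs with hx <;> omega⟩ : Fin d) = ⟨(j : ℕ) + 1, h1⟩ :=
        Fin.ext (by simp [hm])
      rw [hgj]
      exact hf (j : ℕ) hm h1
    · have hm : (j : ℕ) % 2 = 1 := Nat.odd_iff.mp h
      have h1 : (j : ℕ) - 1 + 1 < d := by have := j.isLt; omega
      have hgj : (⟨if (j : ℕ) % 2 = 0 then (j : ℕ) + 1 else (j : ℕ) - 1, by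
          have := j.isLt; split_ifs with hx <;> omega⟩ : Fin d) = ⟨(j : ℕ) - 1, by omega⟩ :=
        Fin.ext (by simp [hm])
      have h2 := hf ((j : ℕ) - 1) (by omega) h1
      rw [show (⟨(j : ℕ) - 1 + 1, h1⟩ : Fin d) = j from
        Fin.ext (by simp only [Fin.val_mk]; omega)] at h2
      rw [hgj, add_comm]
      exact h2
  · intro j _ hh
    have hv := congrArg Fin.val hh
    simp only [Fin.val_mk] at hv
    rcases Nat.even_or_odd (j : ℕ) with h | h
    · rw [if_pos (Nat.even_iff.mp h)] at hv; omega
    · rw [if_neg (by simp [Nat.odd_iff.mp h])] at hv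
      have := Nat.odd_iff.mp h; omega
  · intro j
    apply Fin.ext
    beta_reduce
    simp only [Fin.val_mk]
    split_ifs <;> omega

lemma inner_vf {d : ℕ} (hd : Even d) (x : E d) : (inner ℝ x (vf hd x) : ℝ) = 0 := by
  rw [PiLp.inner_apply]
  simp only [RCLike.inner_apply, starRingEnd_apply, star_trivial]
  refine sum_pair_zero hd _ ?_
  intro m h0 h1
  rw [vf_apply_even hd x m h0 (by omega), vf_apply_odd hd x (m + 1) (by omega) h1]
  rw [show (⟨m + 1 - 1, by omega⟩ : Fin d) = ⟨m, by omega⟩ from Fin.ext (by simp)]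
  ring

lemma vf_ne_zero {d : ℕ} (hd : Even d) {x : E d} (hx : x ≠ 0) : vf hd x ≠ 0 := by
  obtain ⟨l, hl⟩ := id hd
  intro h
  apply hx
  ext j
  show x j = 0
  rcases Nat.even_or_odd (j : ℕ) with hp | hp
  · have hm := Nat.even_iff.mp hp
    have hj1 : (j : ℕ) + 1 < d := by have := j.isLt; omega
    have hz := congrArg (fun v : E d => v ⟨(j : ℕ) + 1, hj1⟩) h
    rw [vf_apply_odd hd x ((j : ℕ) + 1) (by omega) hj1] at hz
    rw [show (⟨(j : ℕ) + 1 - 1, by omega⟩ : Fin d) = j from Fin.ext (by simp)] at hz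
    simpa using hz
  · have hm := Nat.odd_iff.mp hp
    have hj1 : (j : ℕ) - 1 < d := by have := j.isLt; omega
    have hz := congrArg (fun v : E d => v ⟨(j : ℕ) - 1, hj1⟩) h
    rw [vf_apply_even hd x ((j : ℕ) - 1) (by omega) hj1] at hz
    rw [show (⟨(j : ℕ) - 1 + 1, by have := j.isLt; omega⟩ : Fin d) = j from
      Fin.ext (by simp only [Fin.val_mk]; omega)] at hz
    simpa using hz

lemma vf_continuous {d : ℕ} (hd : Even d) : Continuous (vf hd) := by
  unfold vf
  refine (PiLp.continuous_toLp 2 (fun _ : Fin d => ℝ)).comp (continuous_pi fun j => ?_)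
  by_cases h : (j : ℕ) % 2 = 0
  · simp only [dif_pos h]
    exact ((continuous_apply _).comp (PiLp.continuous_ofLp 2 (fun _ : Fin d => ℝ))).neg
  · simp only [dif_neg h]
    exact (continuous_apply _).comp (PiLp.continuous_ofLp 2 (fun _ : Fin d => ℝ))

lemma combo {d : ℕ} {e w : E d} (he : e ≠ 0) (hw : w ≠ 0) (hew : (inner ℝ e w : ℝ) = 0)
    {α β : ℝ} (h : α • e + β • w = 0) : α = 0 ∧ β = 0 := by
  have key : ∀ y : E d, (inner ℝ (α • e + β • w) y : ℝ)
      = α * (inner ℝ e y : ℝ) + β * (inner ℝ w y : ℝ) := by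
    intro y; rw [inner_add_left, real_inner_smul_left, real_inner_smul_left]
  constructor
  · have h1 : α * (inner ℝ e e : ℝ) + β * (inner ℝ w e : ℝ) = 0 := by
      rw [← key e, h, inner_zero_left]
    rw [real_inner_comm e w] at h1
    rw [hew, mul_zero, add_zero] at h1
    exact (mul_eq_zero.mp h1).resolve_right (inner_self_ne_zero.mpr he)
  · have h1 : α * (inner ℝ e w : ℝ) + β * (inner ℝ w w : ℝ) = 0 := by
      rw [← key w, h, inner_zero_left]
    rw [hew, mul_zero, zero_add] at h1
    exact (mul_eq_zero.mp h1).resolve_right (inner_self_ne_zero.mpr hw)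


/-- For even d = 2ℓ ≥ 2, k ≥ 2 and (C,C') ∈ 𝒞, the path Γ̄^{C,C'}
is collision-free at every time t ∈ [0,1], runs from C to C', and the resulting
map Γ̄ : 𝒞 → P(F(ℝ^d,k)) is a continuous section of e_2 over 𝒞. -/
theorem stmt14 (d k : ℕ) (hd2 : 2 ≤ d) (hd : Even d) (hk : 2 ≤ k) :
    (∀ p ∈ Cpairs d k hk,
      (∀ t ∈ Set.Icc (0 : ℝ) 1, (fun i => gammaBar hd hk p.1 p.2 i t) ∈ Conf d k) ∧
      (∀ i, gammaBar hd hk p.1 p.2 i 0 = p.1 i) ∧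
      (∀ i, gammaBar hd hk p.1 p.2 i 1 = p.2 i)) ∧
    ∃ s : ↥(Cpairs d k hk) → C(unitInterval, ↥(Conf d k)),
      Continuous s ∧
      (∀ p : ↥(Cpairs d k hk), ∀ t : unitInterval, ∀ i : Fin k,
        ((s p t : Fin k → E d) i) = gammaBar hd hk (p : (Fin k → E d) × (Fin k → E d)).1
          (p : (Fin k → E d) × (Fin k → E d)).2 i (t : ℝ)) ∧
      (∀ p : ↥(Cpairs d k hk),
        (s p 0 : Fin k → E d) = (p : (Fin k → E d) × (Fin k → E d)).1 ∧
        (s p 1 : Fin k → E d) = (p : (Fin k → E d) × (Fin k → E d)).2) := by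
  have part1 : ∀ p ∈ Cpairs d k hk,
      (∀ t ∈ Set.Icc (0 : ℝ) 1, (fun i => gammaBar hd hk p.1 p.2 i t) ∈ Conf d k) ∧
      (∀ i, gammaBar hd hk p.1 p.2 i 0 = p.1 i) ∧
      (∀ i, gammaBar hd hk p.1 p.2 i 1 = p.2 i) := by
    intro p hp
    obtain ⟨hC, hC', hcol, hcol', hline⟩ := hp
    set e : E d := eV hk p.1 with he_def
    set w : E d := vf hd e with hw_def
    have hC10 : p.1 ⟨1, by omega⟩ - p.1 ⟨0, by omega⟩ ≠ 0 := by
      rw [sub_ne_zero]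
      intro hEq
      have := hC hEq
      simp [Fin.mk.injEq] at this
    have he : e ≠ 0 := by
      rw [he_def]
      unfold eV
      exact smul_ne_zero (inv_ne_zero (norm_ne_zero_iff.mpr hC10)) hC10
    have hw : w ≠ 0 := vf_ne_zero hd he
    have hew : (inner ℝ e w : ℝ) = 0 := inner_vf hd e
    choose r hr using hcol
    have hcol'' : ∀ i, p.2 i ∈ lineC hk p.1 := by
      intro i; rw [hline]; exact hcol' i
    choose r' hr' using hcol''
    refine ⟨?_, ?_, ?_⟩
    · intro t ht i j hij
      simp only at hij
      simp only [gammaBar] at hij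
      split_ifs at hij with h1 h2
      · -- first segment
        rw [hr i, hr j] at hij
        have key : (r i - r j) • e + (3 * t * ((i : ℝ) + 1) - 3 * t * ((j : ℝ) + 1)) • w = 0 := by
          linear_combination (norm := module) hij
        obtain ⟨ha, _⟩ := combo he hw hew key
        apply hC
        rw [hr i, hr j, show r i = r j from by linarith]
      · -- middle segment
        rw [hr i, hr j, hr' i, hr' j] at hij
        have key : ((r i - r j) + (3 * t - 1) * ((r' i - r i) - (r' j - r j))) • e
            + (((i : ℝ) + 1) - ((j : ℝ) + 1)) • w = 0 := by
          linear_combination (norm := module) hij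
        obtain ⟨_, hb⟩ := combo he hw hew key
        have : (i : ℝ) = (j : ℝ) := by linarith
        exact Fin.ext (by exact_mod_cast this)
      · -- last segment
        rw [hr' i, hr' j] at hij
        have key : (r' i - r' j) • e
            + (((i : ℝ) + 1) * (3 - 3 * t) - ((j : ℝ) + 1) * (3 - 3 * t)) • w = 0 := by
          linear_combination (norm := module) hij
        obtain ⟨ha, _⟩ := combo he hw hew key
        apply hC'
        rw [hr' i, hr' j, show r' i = r' j from by linarith]
    · intro i
      simp only [gammaBar, if_pos (by norm_num : (0:ℝ) ≤ 1/3)]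
      norm_num
    · intro i
      rw [gammaBar, if_neg (by norm_num), if_neg (by norm_num)]
      norm_num
  refine ⟨part1, ?_⟩
  -- continuity of the section
  have hc1 : Continuous fun q : ↥(Cpairs d k hk) × unitInterval => q.1.1.1 :=
    by fun_prop
  have hc2 : Continuous fun q : ↥(Cpairs d k hk) × unitInterval => q.1.1.2 :=
    by fun_prop
  have ht : Continuous fun q : ↥(Cpairs d k hk) × unitInterval => (q.2 : ℝ) :=
    by fun_prop
  have heV : Continuous fun q : ↥(Cpairs d k hk) × unitInterval => eV hk q.1.1.1 := by
    have hsub : Continuous fun q : ↥(Cpairs d k hk) × unitInterval =>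
        q.1.1.1 ⟨1, by omega⟩ - q.1.1.1 ⟨0, by omega⟩ :=
      ((continuous_apply _).comp hc1).sub ((continuous_apply _).comp hc1)
    have hne : ∀ q : ↥(Cpairs d k hk) × unitInterval,
        ‖q.1.1.1 ⟨1, by omega⟩ - q.1.1.1 ⟨0, by omega⟩‖ ≠ 0 := by
      intro q
      rw [norm_ne_zero_iff, sub_ne_zero]
      intro hEq
      have := q.1.2.1 hEq
      simp [Fin.mk.injEq] at this
    unfold eV
    exact (hsub.norm.inv₀ hne).smul hsub
  have hvf : Continuous fun q : ↥(Cpairs d k hk) × unitInterval =>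
      vf hd (eV hk q.1.1.1) := (vf_continuous hd).comp heV
  have hF : Continuous fun q : ↥(Cpairs d k hk) × unitInterval =>
      fun i => gammaBar hd hk q.1.1.1 q.1.1.2 i (q.2 : ℝ) := by
    refine continuous_pi fun i => ?_
    simp only [gammaBar]
    have hB1 : Continuous fun q : ↥(Cpairs d k hk) × unitInterval =>
        q.1.1.1 i + (3 * (q.2 : ℝ) * ((i : ℝ) + 1)) • vf hd (eV hk q.1.1.1) :=
      ((continuous_apply i).comp hc1).add
        (((continuous_const.mul ht).mul continuous_const).smul hvf)
    have hB2 : Continuous fun q : ↥(Cpairs d k hk) × unitInterval =>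
        q.1.1.1 i + ((i : ℝ) + 1) • vf hd (eV hk q.1.1.1)
          + (3 * (q.2 : ℝ) - 1) • (q.1.1.2 i - q.1.1.1 i) :=
      (((continuous_apply i).comp hc1).add ((continuous_const : Continuous fun _ : ↥(Cpairs d k hk) × unitInterval => ((i : ℝ) + 1)).smul hvf)).add
        (((continuous_const.mul ht).sub continuous_const).smul
          (((continuous_apply i).comp hc2).sub ((continuous_apply i).comp hc1)))
    have hB3 : Continuous fun q : ↥(Cpairs d k hk) × unitInterval =>
        q.1.1.2 i + (((i : ℝ) + 1) * (3 - 3 * (q.2 : ℝ))) • vf hd (eV hk q.1.1.1) :=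
      ((continuous_apply i).comp hc2).add
        ((continuous_const.mul (continuous_const.sub (continuous_const.mul ht))).smul hvf)
    refine Continuous.if_le ?_ ?_ ht continuous_const ?_
    · exact hB1
    · refine Continuous.if_le hB2 hB3 ht continuous_const ?_
      intro q hq
      rw [hq]
      module
    · intro q hq
      rw [hq, if_pos (by norm_num : (1:ℝ)/3 ≤ 2/3)]
      module
  have hmem : ∀ q : ↥(Cpairs d k hk) × unitInterval,
      (fun i => gammaBar hd hk q.1.1.1 q.1.1.2 i (q.2 : ℝ)) ∈ Conf d k :=
    fun q => (part1 q.1.1 q.1.2).1 (q.2 : ℝ) q.2.2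
  let G : C(↥(Cpairs d k hk) × unitInterval, ↥(Conf d k)) :=
    ⟨fun q => ⟨fun i => gammaBar hd hk q.1.1.1 q.1.1.2 i (q.2 : ℝ), hmem q⟩,
      hF.subtype_mk _⟩
  refine ⟨fun p => G.curry p, G.curry.continuous, ?_, ?_⟩
  · intro p t i
    rfl
  · intro p
    have h0 : ((0 : unitInterval) : ℝ) = 0 := rfl
    have h1 : ((1 : unitInterval) : ℝ) = 1 := rfl
    constructor
    · funext i
      show gammaBar hd hk p.1.1 p.1.2 i ((0 : unitInterval) : ℝ) = _
      rw [h0]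
      exact (part1 p.1 p.2).2.1 i
    · funext i
      show gammaBar hd hk p.1.1 p.1.2 i ((1 : unitInterval) : ℝ) = _
      rw [h1]
      exact (part1 p.1 p.2).2.2 i
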